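/- With the notation of the context, for every s ∈ F_q, setting u = 1 + t·s + n·s², the character sum identity ∑_{x ∈ F_q, x ≠ s} χ₄(1 + ω^ℓ·x)·η(x − s) = χ₄'(u)³ · χ₄'(n − t²/4)³ · J(η, χ₄') − χ₄'(n) holds. -/

import Mathlib

open Finset

lemma aux_gen_surj {G : Type*} [Group G] [Fintype G] {g : G}
    (h : orderOf g = Fintype.card G) (x : G) : ∃ m : ℕ, g ^ m = x := by
  have htop : Subgroup.zpowers g = ⊤ := by
    apply Subgroup.eq_top_of_card_eq
    rw [Nat.card_zpowers, h, Nat.card_eq_fintype_card]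
  have hx : x ∈ Subgroup.zpowers g := htop ▸ Subgroup.mem_top x
  obtain ⟨k, hk⟩ := Subgroup.mem_zpowers_iff.mp hx
  have hord : 0 < orderOf g := by rw [h]; exact Fintype.card_pos
  refine ⟨(k % (orderOf g : ℤ)).toNat, ?_⟩
  rw [← zpow_natCast, Int.toNat_of_nonneg (Int.emod_nonneg k (by exact_mod_cast hord.ne')),
    zpow_mod_orderOf]
  exact hk

lemma aux_sq_sum {K : Type*} [Field K] [Fintype K] [DecidableEq K]
    (hchar2 : ringChar K ≠ 2) (F : K → ℂ) :
    ∑ v : K, F (v ^ 2) = ∑ z : K, F z + ∑ z : K, ((quadraticChar K z : ℤ) : ℂ) * F z := by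
  rw [← Finset.sum_fiberwise' Finset.univ (fun v : K => v ^ 2) F, ← Finset.sum_add_distrib]
  refine Finset.sum_congr rfl fun z _ => ?_
  rw [Finset.sum_const, nsmul_eq_mul]
  have hc := quadraticChar_card_sqrts hchar2 z
  have hset : ({x : K | x ^ 2 = z}.toFinset : Finset K) = univ.filter (fun v : K => v ^ 2 = z) := by
    rw [Set.toFinset_setOf]
  rw [hset] at hc
  have : ((univ.filter (fun v : K => v ^ 2 = z)).card : ℂ) = ((quadraticChar K z : ℤ) : ℂ) + 1 := by
    exact_mod_cast congrArg (fun r : ℤ => (r : ℂ)) hc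
  rw [this]
  ring

lemma aux_K {K : Type*} [Field K] [Fintype K] [DecidableEq K]
    (η χ₄' : MulChar K ℂ)
    (h2K : (2 : K) ≠ 0) (hchar2 : ringChar K ≠ 2)
    (hη2 : ∀ a : K, η a = χ₄' a ^ 2)
    (hqc : ∀ a : K, η a = ((quadraticChar K a : ℤ) : ℂ))
    (h4 : ∀ a : K, a ≠ 0 → χ₄' a ^ 4 = 1)
    (hχne1 : χ₄' ≠ 1)
    (hneg : η (-1) = 1)
    (n t s u : K) (hn0 : n ≠ 0) (hu : u = 1 + t * s + n * s ^ 2) (hu0 : u ≠ 0)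
    (hd0 : n - t ^ 2 / 4 ≠ 0) :
    ∑ x ∈ Finset.univ.filter (fun x : K => x ≠ s), χ₄' (1 + t * x + n * x ^ 2) * η (x - s)
      = χ₄' u ^ 3 * χ₄' (n - t ^ 2 / 4) ^ 3 * (∑ x : K, η x * χ₄' (1 - x)) - χ₄' n := by
  have h4K : (4 : K) ≠ 0 := by
    intro h
    apply h2K
    have h22 : (2 : K) * 2 = 4 := by norm_num
    rcases mul_eq_zero.mp (h22.trans h) with h' | h' <;> exact h'
  have hu0' : 1 + t * s + n * s ^ 2 ≠ 0 := by rw [← hu]; exact hu0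
  set b : K := t + 2 * n * s with hb
  set d : K := n - t ^ 2 / 4 with hd
  set c : K := d / u with hc
  have hc0 : c ≠ 0 := div_ne_zero hd0 hu0
  -- step 1 : shift x = y + s
  have step1 : ∑ x ∈ Finset.univ.filter (fun x : K => x ≠ s),
        χ₄' (1 + t * x + n * x ^ 2) * η (x - s)
      = ∑ y ∈ Finset.univ.filter (fun y : K => y ≠ 0), χ₄' (u + b * y + n * y ^ 2) * η y := by
    refine Finset.sum_nbij' (fun x => x - s) (fun y => y + s) ?_ ?_ ?_ ?_ ?_
    · intro a ha
      simp only [mem_filter, mem_univ, true_and] at ha ⊢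
      exact sub_ne_zero.mpr ha
    · intro a ha
      simp only [mem_filter, mem_univ, true_and] at ha ⊢
      intro h; apply ha; rwa [← sub_eq_zero, add_sub_cancel_right] at h
    · intro a _; ring
    · intro a _; ring
    · intro a _
      have : 1 + t * a + n * a ^ 2 = u + b * (a - s) + n * (a - s) ^ 2 := by
        rw [hu, hb]; ring
      rw [this]
  -- step 2 : pointwise inversion identity
  have step2 : ∑ y ∈ Finset.univ.filter (fun y : K => y ≠ 0),
        χ₄' (u + b * y + n * y ^ 2) * η y
      = ∑ y ∈ Finset.univ.filter (fun y : K => y ≠ 0),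
        χ₄' (n + b * y⁻¹ + u * (y⁻¹) ^ 2) := by
    refine Finset.sum_congr rfl fun y hy => ?_
    have hy0 : y ≠ 0 := by simpa using (mem_filter.mp hy).2
    have hid : u + b * y + n * y ^ 2 = y ^ 2 * (n + b * y⁻¹ + u * (y⁻¹) ^ 2) := by
      field_simp
      ring
    have hη1 : η y * η y = 1 := by
      have : η y * η y = χ₄' y ^ 4 := by rw [hη2]; ring
      rw [this]; exact h4 y hy0
    rw [hid, map_mul, map_pow, ← hη2 y, mul_right_comm, hη1, one_mul]
  -- step 3 : reindex y ↦ y⁻¹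
  have step3 : ∑ y ∈ Finset.univ.filter (fun y : K => y ≠ 0),
        χ₄' (n + b * y⁻¹ + u * (y⁻¹) ^ 2)
      = ∑ w ∈ Finset.univ.filter (fun w : K => w ≠ 0), χ₄' (n + b * w + u * w ^ 2) := by
    refine Finset.sum_nbij' (fun y => y⁻¹) (fun w => w⁻¹) ?_ ?_ ?_ ?_ ?_
    · intro a ha
      simp only [mem_filter, mem_univ, true_and] at ha ⊢
      exact inv_ne_zero ha
    · intro a ha
      simp only [mem_filter, mem_univ, true_and] at ha ⊢
      exact inv_ne_zero ha
    · intro a _; exact inv_inv a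
    · intro a _; exact inv_inv a
    · intro a _; rfl
  -- step 4 : add back w = 0
  have step4 : ∑ w ∈ Finset.univ.filter (fun w : K => w ≠ 0), χ₄' (n + b * w + u * w ^ 2)
      = (∑ w : K, χ₄' (n + b * w + u * w ^ 2)) - χ₄' n := by
    rw [Finset.filter_ne' Finset.univ (0 : K)]
    have h0 : χ₄' (n + b * 0 + u * 0 ^ 2) = χ₄' n := by norm_num
    have hsum := Finset.sum_erase_add Finset.univ (fun w : K => χ₄' (n + b * w + u * w ^ 2))
      (Finset.mem_univ (0 : K))
    rw [h0] at hsum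
    exact eq_sub_of_add_eq hsum
  -- step 5 : complete the square, w = v - b/(2u)
  have step5 : ∑ w : K, χ₄' (n + b * w + u * w ^ 2) = ∑ v : K, χ₄' (u * v ^ 2 + c) := by
    refine (Fintype.sum_bijective (fun v : K => v - b / (2 * u))
      (Equiv.subRight (b / (2 * u))).bijective
      (fun v : K => χ₄' (u * v ^ 2 + c))
      (fun w : K => χ₄' (n + b * w + u * w ^ 2)) ?_).symm
    intro v
    show χ₄' (u * v ^ 2 + c) = χ₄' (n + b * (v - b / (2 * u)) + u * (v - b / (2 * u)) ^ 2)
    congr 1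
    have h4d : (4 : K) * d = 4 * n - t ^ 2 := by rw [hd]; field_simp
    have hkey : b ^ 2 = 4 * u * n - 4 * d := by rw [hb, hu]; linear_combination h4d
    have expand : n + b * (v - b / (2 * u)) + u * (v - b / (2 * u)) ^ 2
        = u * v ^ 2 + (n - b ^ 2 / (4 * u)) := by
      field_simp
      ring
    rw [expand, hc]
    congr 1
    rw [hkey]
    field_simp
    ring
  -- step 6 : squares expansion
  have step6 : ∑ v : K, χ₄' (u * v ^ 2 + c)
      = ∑ z : K, χ₄' (u * z + c) + ∑ z : K, η z * χ₄' (u * z + c) := by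
    have hB := aux_sq_sum hchar2 (fun z : K => χ₄' (u * z + c))
    rw [hB]
    congr 1
    refine Finset.sum_congr rfl fun z _ => ?_
    rw [← hqc z]
  -- step 7 : first sum vanishes
  have step7 : ∑ z : K, χ₄' (u * z + c) = 0 := by
    have h1 : ∑ z : K, χ₄' (u * z + c) = ∑ a : K, χ₄' a := by
      refine Fintype.sum_bijective (fun z : K => u * z + c)
        (((Equiv.mulLeft₀ u hu0).trans (Equiv.addRight c)).bijective) _ _ ?_
      intro z; rfl
    rw [h1]
    exact MulChar.sum_eq_zero_of_ne_one hχne1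
  -- step 8 : second sum
  have step8 : ∑ z : K, η z * χ₄' (u * z + c)
      = η (c / u) * χ₄' c * (∑ x : K, η x * χ₄' (1 - x)) := by
    have hcu0 : c / u ≠ 0 := div_ne_zero hc0 hu0
    have h1 : ∑ z : K, η z * χ₄' (u * z + c)
        = ∑ x : K, η (c / u) * η x * (χ₄' c * χ₄' (x + 1)) := by
      refine (Fintype.sum_bijective (fun x : K => c / u * x)
        (Equiv.mulLeft₀ (c / u) hcu0).bijective
        (fun x : K => η (c / u) * η x * (χ₄' c * χ₄' (x + 1)))
        (fun z : K => η z * χ₄' (u * z + c)) ?_).symm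
      intro x
      show η (c / u) * η x * (χ₄' c * χ₄' (x + 1)) = η (c / u * x) * χ₄' (u * (c / u * x) + c)
      rw [← map_mul, ← map_mul]
      congr 1
      congr 1
      field_simp
    have h2 : ∑ x : K, η (c / u) * η x * (χ₄' c * χ₄' (x + 1))
        = η (c / u) * χ₄' c * ∑ x : K, η x * χ₄' (x + 1) := by
      rw [Finset.mul_sum]
      refine Finset.sum_congr rfl fun x _ => ?_
      ring
    have h3 : ∑ x : K, η x * χ₄' (x + 1) = ∑ x : K, η x * χ₄' (1 - x) := by
      refine Fintype.sum_bijective (fun x : K => -x) (Equiv.neg K).bijective _ _ ?_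
      intro x
      have hnx : η (-x) = η x := by
        rw [show (-x : K) = -1 * x by ring, map_mul, hneg, one_mul]
      rw [hnx]
      congr 2
      ring
    rw [h1, h2, h3]
  -- final assembly
  have hA4 : χ₄' u ^ 4 = 1 := h4 u hu0
  have hB4 : χ₄' d ^ 4 = 1 := h4 d hd0
  have hA0 : χ₄' u ≠ 0 := by
    intro h; rw [h] at hA4; norm_num at hA4
  have hCu : χ₄' c * χ₄' u = χ₄' d := by
    have h1 : χ₄' (c * u) = χ₄' d := by rw [hc, div_mul_cancel₀ d hu0]
    rw [map_mul] at h1; exact h1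
  have hD : χ₄' (c / u) * χ₄' u = χ₄' c := by
    have h1 : χ₄' (c / u * u) = χ₄' c := by rw [div_mul_cancel₀ c hu0]
    rw [map_mul] at h1; exact h1
  have hC : χ₄' c = χ₄' d * χ₄' u ^ 3 := by
    have h1 : χ₄' c * χ₄' u * χ₄' u ^ 3 = χ₄' d * χ₄' u ^ 3 := by rw [hCu]
    have h2 : χ₄' c * χ₄' u * χ₄' u ^ 3 = χ₄' c * χ₄' u ^ 4 := by ring
    rw [h2, hA4, mul_one] at h1; exact h1
  have hE : η (c / u) = χ₄' d ^ 2 := by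
    have h1 : η (c / u) * χ₄' u ^ 2 = χ₄' d ^ 2 * χ₄' u ^ 2 := by
      rw [hη2 (c / u)]
      calc χ₄' (c / u) ^ 2 * χ₄' u ^ 2 = (χ₄' (c / u) * χ₄' u) ^ 2 := by ring
        _ = χ₄' c ^ 2 := by rw [hD]
        _ = (χ₄' d * χ₄' u ^ 3) ^ 2 := by rw [hC]
        _ = χ₄' d ^ 2 * χ₄' u ^ 2 * χ₄' u ^ 4 := by ring
        _ = χ₄' d ^ 2 * χ₄' u ^ 2 := by rw [hA4, mul_one]
    exact mul_right_cancel₀ (pow_ne_zero 2 hA0) h1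
  have hfinal : η (c / u) * χ₄' c = χ₄' u ^ 3 * χ₄' d ^ 3 := by
    rw [hE, hC]
    ring
  rw [step1, step2, step3, step4, step5, step6, step7, step8, zero_add, hfinal]

/-- With the same setup as Statement 6, for every `s ∈ F_q`,
setting `u = 1 + ts + ns²`, one has
`∑_{x ∈ F_q, x ≠ s} χ₄(1 + ω^ℓ x) η(x − s)
  = χ₄'(u)³ χ₄'(n − t²/4)³ J(η, χ₄') − χ₄'(n)`. -/
theorem stmt_7 (K L : Type*) [Field K] [Field L] [Fintype K] [Fintype L]
    [Algebra K L] [DecidableEq K] (q : ℕ)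
    (hq : Fintype.card K = q) (hL : Fintype.card L = q ^ 2) (hq4 : q % 4 = 1)
    (ω : L) (hω : orderOf ω = q ^ 2 - 1)
    (χ₄ : MulChar L ℂ) (hχ₄ : orderOf χ₄ = 4)
    (η χ₄' : MulChar K ℂ) (hη : orderOf η = 2) (hχ₄' : orderOf χ₄' = 4)
    (γ : K) (hγ : algebraMap K L γ = ω ^ (q + 1))
    (hcompat : χ₄ ω = χ₄' γ)
    (ℓ : ℤ) (hℓ : ¬ ((q : ℤ) + 1 ∣ ℓ))
    (n t : K)
    (hn : algebraMap K L n = ω ^ (ℓ * ((q : ℤ) + 1)))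
    (ht : algebraMap K L t = ω ^ ℓ + ω ^ (ℓ * (q : ℤ)))
    (s : K) (u : K) (hu : u = 1 + t * s + n * s ^ 2) :
    ∑ x ∈ Finset.univ.filter (fun x : K => x ≠ s),
        χ₄ (1 + ω ^ ℓ * algebraMap K L x) * η (x - s)
      = (χ₄' u) ^ 3 * (χ₄' (n - t ^ 2 / 4)) ^ 3 * (∑ x : K, η x * χ₄' (1 - x))
          - χ₄' n := by
  -- numeric preliminaries
  have hK1 : 1 < q := by
    rw [← hq]; exact Fintype.one_lt_card
  have hq5 : 5 ≤ q := by omega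
  have hqsq : 4 ≤ q ^ 2 := by nlinarith
  have hchar2 : ringChar K ≠ 2 := by
    intro h
    have h2 := FiniteField.even_card_iff_char_two.mp h
    rw [hq] at h2
    omega
  have h2K : (2 : K) ≠ 0 := by
    intro h
    have hdvd : ringChar K ∣ 2 := (CharP.cast_eq_zero_iff K (ringChar K) 2).mp h
    have hp : (ringChar K).Prime := CharP.char_is_prime K (ringChar K)
    exact hchar2 ((Nat.prime_dvd_prime_iff_eq hp Nat.prime_two).mp hdvd)
  have halg : Function.Injective (algebraMap K L) := (algebraMap K L).injective
  -- ω is nonzero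
  have hω1 : ω ^ (q ^ 2 - 1) = 1 := by rw [← hω]; exact pow_orderOf_eq_one ω
  have hω0 : ω ≠ 0 := by
    intro h
    rw [h, zero_pow (by omega : q ^ 2 - 1 ≠ 0)] at hω1
    exact zero_ne_one hω1
  set ωu : Lˣ := Units.mk0 ω hω0 with hωu
  have hωuval : (ωu : L) = ω := rfl
  have hωuord : orderOf ωu = q ^ 2 - 1 := by rw [← orderOf_units, hωuval, hω]
  haveI : DecidableEq L := Classical.decEq L
  have hLu : Fintype.card Lˣ = q ^ 2 - 1 := by rw [Fintype.card_units, hL]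
  -- Lemma A : χ₄ factors through the norm
  have hA : ∀ (z : L) (a : K), algebraMap K L a = z ^ (q + 1) → χ₄ z = χ₄' a := by
    intro z a h
    by_cases hz : z = 0
    · rw [hz, zero_pow (by omega : q + 1 ≠ 0)] at h
      have ha : a = 0 := by
        apply halg; rw [h, map_zero]
      rw [hz, ha, MulChar.map_nonunit χ₄ not_isUnit_zero,
        MulChar.map_nonunit χ₄' not_isUnit_zero]
    · obtain ⟨m, hm⟩ := aux_gen_surj (hωuord.trans hLu.symm) (Units.mk0 z hz)
      have hzm : ω ^ m = z := by
        have := congrArg (Units.val) hm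
        simpa [hωuval] using this
      have hzq : z ^ (q + 1) = algebraMap K L (γ ^ m) := by
        rw [← hzm, ← pow_mul, mul_comm m (q + 1), pow_mul, ← hγ, ← map_pow]
      have ha : a = γ ^ m := halg (by rw [h, hzq])
      rw [← hzm, ha, map_pow, map_pow, hcompat]
  -- elements of K are fixed by x ↦ x^q in L
  have hKfix : ∀ a : K, (algebraMap K L a) ^ q = algebraMap K L a := by
    intro a
    rw [← map_pow]
    congr 1
    conv_rhs => rw [← FiniteField.pow_card a]
    rw [hq]
  -- divisibility criterion
  have hdvd : ∀ k : ℤ, ω ^ (k * (q : ℤ)) = ω ^ k → ((q : ℤ) + 1) ∣ k := by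
    intro k hk
    have h1 : ωu ^ (k * (q : ℤ)) = ωu ^ k := by
      apply Units.ext
      rw [Units.val_zpow_eq_zpow_val, Units.val_zpow_eq_zpow_val, hωuval]
      exact hk
    have h2 : ωu ^ (k * (q : ℤ) - k) = 1 := by
      rw [zpow_sub, h1, mul_inv_cancel]
    have h3 : ((q ^ 2 - 1 : ℕ) : ℤ) ∣ (k * (q : ℤ) - k) := by
      rw [← hωuord]
      exact orderOf_dvd_iff_zpow_eq_one.mpr h2
    have hcast : ((q ^ 2 - 1 : ℕ) : ℤ) = ((q : ℤ) - 1) * ((q : ℤ) + 1) := by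
      have : (1 : ℕ) ≤ q ^ 2 := by omega
      push_cast [this]
      ring
    rw [hcast] at h3
    have h4 : k * (q : ℤ) - k = k * ((q : ℤ) - 1) := by ring
    rw [h4] at h3
    obtain ⟨e, he⟩ := h3
    refine ⟨e, ?_⟩
    have hq1 : (q : ℤ) - 1 ≠ 0 := by
      have : (5 : ℤ) ≤ (q : ℤ) := by exact_mod_cast hq5
      omega
    apply mul_left_cancel₀ hq1
    rw [show ((q:ℤ) - 1) * k = k * ((q:ℤ) - 1) from mul_comm _ _, he]
    ring
  -- powers ω^k with (q+1) ∤ k are not in K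
  have hnotK : ∀ k : ℤ, ¬((q : ℤ) + 1 ∣ k) → ∀ x : K, ω ^ k ≠ algebraMap K L x := by
    intro k hk x he
    apply hk
    apply hdvd
    calc ω ^ (k * (q : ℤ)) = (ω ^ k) ^ (q : ℕ) := by
          rw [← zpow_natCast (ω ^ k) q, ← zpow_mul]
      _ = (algebraMap K L x) ^ q := by rw [he]
      _ = algebraMap K L x := hKfix x
      _ = ω ^ k := he.symm
  have hℓq : ¬((q : ℤ) + 1 ∣ ℓ * (q : ℤ)) := by
    intro hd
    apply hℓ
    have hcop : IsCoprime ((q : ℤ) + 1) (q : ℤ) := ⟨1, -1, by ring⟩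
    exact hcop.dvd_of_dvd_mul_right hd
  have hωω : ω ^ ℓ ≠ ω ^ (ℓ * (q : ℤ)) := by
    intro h
    exact hℓ (hdvd ℓ h.symm)
  -- the norm identity
  have hnorm : ∀ x : K, (1 + ω ^ ℓ * algebraMap K L x) * (1 + ω ^ (ℓ * (q : ℤ)) * algebraMap K L x)
      = algebraMap K L (1 + t * x + n * x ^ 2) := by
    intro x
    have hAB : ω ^ ℓ * ω ^ (ℓ * (q : ℤ)) = ω ^ (ℓ * ((q : ℤ) + 1)) := by
      rw [← zpow_add₀ hω0]
      congr 1
      ring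
    rw [map_add, map_add, map_one, map_mul, map_mul, map_pow, ht, hn, ← hAB]
    ring
  -- the factors are nonzero
  have hfz1 : ∀ x : K, (1 + ω ^ ℓ * algebraMap K L x) ≠ 0 := by
    intro x h0
    have hx0 : x ≠ 0 := by
      intro h
      rw [h, map_zero, mul_zero, add_zero] at h0
      exact one_ne_zero h0
    have hXne : algebraMap K L x ≠ 0 := fun h => hx0 (halg (by rw [h, map_zero]))
    have : ω ^ ℓ = algebraMap K L (-x⁻¹) := by
      rw [map_neg, map_inv₀]
      field_simp at h0 ⊢
      linear_combination h0
    exact hnotK ℓ hℓ _ this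
  have hfz2 : ∀ x : K, (1 + ω ^ (ℓ * (q : ℤ)) * algebraMap K L x) ≠ 0 := by
    intro x h0
    have hx0 : x ≠ 0 := by
      intro h
      rw [h, map_zero, mul_zero, add_zero] at h0
      exact one_ne_zero h0
    have hXne : algebraMap K L x ≠ 0 := fun h => hx0 (halg (by rw [h, map_zero]))
    have : ω ^ (ℓ * (q : ℤ)) = algebraMap K L (-x⁻¹) := by
      rw [map_neg, map_inv₀]
      field_simp at h0 ⊢
      linear_combination h0
    exact hnotK _ hℓq _ this
  have hf : ∀ x : K, 1 + t * x + n * x ^ 2 ≠ 0 := by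
    intro x h0
    have := hnorm x
    rw [h0, map_zero] at this
    rcases mul_eq_zero.mp this with h | h
    · exact hfz1 x h
    · exact hfz2 x h
  have hu0 : u ≠ 0 := by rw [hu]; exact hf s
  have hn0 : n ≠ 0 := by
    intro h
    rw [h, map_zero] at hn
    exact (zpow_ne_zero _ hω0) hn.symm
  have h4K : (4 : K) ≠ 0 := by
    intro h
    apply h2K
    have h22 : (2 : K) * 2 = 4 := by norm_num
    rcases mul_eq_zero.mp (h22.trans h) with h' | h' <;> exact h'
  have hd0 : n - t ^ 2 / 4 ≠ 0 := by
    have h1 : algebraMap K L (t ^ 2 - 4 * n) = (ω ^ ℓ - ω ^ (ℓ * (q : ℤ))) ^ 2 := by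
      have hAB : ω ^ ℓ * ω ^ (ℓ * (q : ℤ)) = ω ^ (ℓ * ((q : ℤ) + 1)) := by
        rw [← zpow_add₀ hω0]
        congr 1
        ring
      rw [map_sub, map_pow, map_mul, ht, hn, ← hAB, map_ofNat]
      ring
    have h2 : t ^ 2 - 4 * n ≠ 0 := by
      intro h
      rw [h, map_zero] at h1
      exact (pow_ne_zero 2 (sub_ne_zero.mpr hωω)) h1.symm
    intro h
    apply h2
    have h3 : t ^ 2 - 4 * n = -4 * (n - t ^ 2 / 4) := by
      field_simp
      ring
    rw [h3, h, mul_zero]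
  -- Frobenius computation
  have hfrob : ∀ x : K, (1 + ω ^ ℓ * algebraMap K L x) ^ q
      = 1 + ω ^ (ℓ * (q : ℤ)) * algebraMap K L x := by
    intro x
    obtain ⟨e, hpp, hqe⟩ := FiniteField.card K (ringChar K)
    rw [hq] at hqe
    haveI : CharP L (ringChar K) := charP_of_injective_algebraMap halg (ringChar K)
    haveI : Fact (ringChar K).Prime := ⟨hpp⟩
    have hadd : (1 + ω ^ ℓ * algebraMap K L x) ^ q
        = 1 ^ q + (ω ^ ℓ * algebraMap K L x) ^ q := by
      conv_lhs => rw [hqe]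
      conv_rhs => rw [hqe]
      exact add_pow_char_pow ..
    rw [hadd, one_pow, mul_pow, hKfix x]
    congr 2
    rw [← zpow_natCast (ω ^ ℓ) q, ← zpow_mul]
  -- pointwise identification of the summands
  have hmain : ∀ x : K, χ₄ (1 + ω ^ ℓ * algebraMap K L x) = χ₄' (1 + t * x + n * x ^ 2) := by
    intro x
    apply hA
    have hstep : (1 + ω ^ ℓ * algebraMap K L x) ^ (q + 1)
        = algebraMap K L (1 + t * x + n * x ^ 2) := by
      rw [pow_succ, hfrob x, mul_comm]
      exact hnorm x
    exact hstep.symm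
  -- generator facts for K
  have hγL0 : algebraMap K L γ ≠ 0 := by rw [hγ]; exact pow_ne_zero _ hω0
  have hγ0 : γ ≠ 0 := fun h => hγL0 (by rw [h, map_zero])
  have hγord : orderOf γ = q - 1 := by
    have h1 : orderOf (algebraMap K L γ) = orderOf γ :=
      orderOf_injective (algebraMap K L).toMonoidHom halg γ
    have hfact : q ^ 2 - 1 = (q + 1) * (q - 1) := by
      have := Nat.sq_sub_sq q 1
      simpa using this
    have h2 : orderOf (algebraMap K L γ) = q - 1 := by
      rw [hγ, orderOf_pow' ω (by omega : q + 1 ≠ 0), hω, hfact,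
        Nat.gcd_eq_right (Dvd.intro _ rfl), Nat.mul_div_cancel_left _ (by omega : 0 < q + 1)]
    rw [← h1, h2]
  have hKu : Fintype.card Kˣ = q - 1 := by rw [Fintype.card_units, hq]
  set γu : Kˣ := Units.mk0 γ hγ0 with hγudef
  have hγuord : orderOf γu = q - 1 := by
    rw [← orderOf_units]
    exact hγord
  have hrep : ∀ a : K, a ≠ 0 → ∃ m : ℕ, γ ^ m = a := by
    intro a ha
    obtain ⟨m, hm⟩ := aux_gen_surj (hγuord.trans hKu.symm) (Units.mk0 a ha)
    refine ⟨m, ?_⟩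
    have := congrArg Units.val hm
    simpa [hγudef] using this
  -- value facts
  have hη2pow : η ^ 2 = 1 := by rw [← hη]; exact pow_orderOf_eq_one η
  have hχ4pow : χ₄' ^ 4 = 1 := by rw [← hχ₄']; exact pow_orderOf_eq_one χ₄'
  have hval1 : ∀ (χ : MulChar K ℂ) (k : ℕ), k ≠ 0 → χ ^ k = 1 →
      ∀ a : K, a ≠ 0 → χ a ^ k = 1 := by
    intro χ k hk h a ha
    rw [← MulChar.pow_apply' χ hk a, h]
    exact MulChar.one_apply_coe (Units.mk0 a ha)
  have h4 : ∀ a : K, a ≠ 0 → χ₄' a ^ 4 = 1 := hval1 χ₄' 4 (by norm_num) hχ4pow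
  have hη_sq : ∀ a : K, a ≠ 0 → η a ^ 2 = 1 := hval1 η 2 (by norm_num) hη2pow
  have hηγ : η γ = -1 := by
    have hsq : η γ * η γ = 1 := by
      have := hη_sq γ hγ0
      rwa [sq] at this
    rcases mul_self_eq_one_iff.mp hsq with h | h
    · exfalso
      have h1 : η = 1 := by
        apply MulChar.ext
        intro a
        obtain ⟨m, hm⟩ := hrep (a : K) (Units.ne_zero a)
        rw [MulChar.one_apply_coe, ← hm, map_pow, h, one_pow]
      rw [h1, orderOf_one] at hη
      norm_num at hη
    · exact h
  have hχγ : χ₄' γ ^ 2 = -1 := by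
    have hsq : (χ₄' γ ^ 2) * (χ₄' γ ^ 2) = 1 := by
      have h1 : χ₄' γ ^ 2 * χ₄' γ ^ 2 = χ₄' γ ^ 4 := by ring
      rw [h1]
      exact h4 γ hγ0
    rcases mul_self_eq_one_iff.mp hsq with h | h
    · exfalso
      have hsq1 : χ₄' ^ 2 = 1 := by
        apply MulChar.ext
        intro a
        obtain ⟨m, hm⟩ := hrep (a : K) (Units.ne_zero a)
        rw [MulChar.one_apply_coe, MulChar.pow_apply' χ₄' (by norm_num : (2:ℕ) ≠ 0), ← hm,
          map_pow, show (χ₄' γ ^ m) ^ 2 = (χ₄' γ ^ 2) ^ m from by ring, h, one_pow]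
      have hdvd2 : orderOf χ₄' ∣ 2 := orderOf_dvd_of_pow_eq_one hsq1
      rw [hχ₄'] at hdvd2
      norm_num at hdvd2
    · exact h
  have hη2 : ∀ a : K, η a = χ₄' a ^ 2 := by
    intro a
    by_cases ha : a = 0
    · rw [ha, MulChar.map_nonunit η not_isUnit_zero, MulChar.map_nonunit χ₄' not_isUnit_zero]
      norm_num
    · obtain ⟨m, hm⟩ := hrep a ha
      rw [← hm, map_pow, map_pow, hηγ,
        show (χ₄' γ ^ m) ^ 2 = (χ₄' γ ^ 2) ^ m from by ring, hχγ]
  -- η is the quadratic character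
  have hγns : ¬ IsSquare γ := by
    rintro ⟨r, hr⟩
    have hr0 : r ≠ 0 := by
      rintro rfl
      rw [mul_zero] at hr
      exact hγ0 hr
    have h1 : γ ^ ((q - 1) / 2) = 1 := by
      rw [hr]
      have h2 : (r * r) ^ ((q - 1) / 2) = r ^ (q - 1) := by
        rw [← pow_two, ← pow_mul]
        congr 1
        omega
      rw [h2]
      have := FiniteField.pow_card_sub_one_eq_one r hr0
      rwa [hq] at this
    have h2 : (q - 1) ∣ ((q - 1) / 2) := by
      have h2' : orderOf γ ∣ (q - 1) / 2 := orderOf_dvd_of_pow_eq_one h1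
      rwa [hγord] at h2'
    have h3 := Nat.le_of_dvd (by omega) h2
    omega
  have hqcγ : quadraticChar K γ = -1 := by
    rcases quadraticChar_dichotomy hγ0 with h | h
    · exact absurd ((quadraticChar_one_iff_isSquare hγ0).mp h) hγns
    · exact h
  have hqc : ∀ a : K, η a = ((quadraticChar K a : ℤ) : ℂ) := by
    intro a
    by_cases ha : a = 0
    · rw [ha, MulChar.map_nonunit η not_isUnit_zero, quadraticChar_zero]
      norm_num
    · obtain ⟨m, hm⟩ := hrep a ha
      rw [← hm, map_pow, map_pow, hηγ, hqcγ]
      push_cast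
      ring
  have hχne1 : χ₄' ≠ 1 := by
    intro h
    rw [h, orderOf_one] at hχ₄'
    norm_num at hχ₄'
  have hneg : η (-1) = 1 := by
    have hsq : IsSquare (-1 : K) := by
      rw [FiniteField.isSquare_neg_one_iff, hq]
      omega
    obtain ⟨i, hi⟩ := hsq
    have hi0 : i ≠ 0 := by
      rintro rfl
      rw [mul_zero] at hi
      exact (neg_ne_zero.mpr (one_ne_zero : (1:K) ≠ 0)) hi
    rw [hi, map_mul]
    have := hη_sq i hi0
    rwa [sq] at this
  -- assemble
  have hsum : ∑ x ∈ Finset.univ.filter (fun x : K => x ≠ s),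
      χ₄ (1 + ω ^ ℓ * algebraMap K L x) * η (x - s)
      = ∑ x ∈ Finset.univ.filter (fun x : K => x ≠ s),
          χ₄' (1 + t * x + n * x ^ 2) * η (x - s) :=
    Finset.sum_congr rfl fun x _ => by rw [hmain x]
  rw [hsum]
  exact aux_K η χ₄' h2K hchar2 hη2 hqc h4 hχne1 hneg n t s u hn0 hu hu0 hd0
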